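/- For q ∈ (0,1) (or more generally q ≠ roots making denominators vanish), k ≥ 1, and distinct complex numbers z₁,…,z_k in generic position, the symmetrization identity ∑_{σ ∈ S_k} ∏_{1 ≤ B < A ≤ k} (z_{σ(A)} − q z_{σ(B)})/(z_{σ(A)} − z_{σ(B)}) = (q;q)_k / (1−q)^k holds, where (q;q)_k = ∏_{i=1}^k (1 − q^i). -/

import Mathlib

open Finset Polynomial

lemma sumA (q : ℂ) (hq0 : q ≠ 0) (hq1 : q ≠ 1) {ι : Type*} [DecidableEq ι] (s : Finset ι)
    (z : ι → ℂ) (hz : Set.InjOn z s) (h0 : ∀ i ∈ s, z i ≠ 0) :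
    ∑ p ∈ s, ∏ j ∈ s.erase p, (z j - q * z p) / (z j - z p)
      = (1 - q ^ s.card) / (1 - q) := by
  rcases s.eq_empty_or_nonempty with rfl | hs
  · simp
  obtain ⟨n, hn⟩ : ∃ n, s.card = n + 1 :=
    ⟨s.card - 1, (Nat.succ_pred_eq_of_pos (card_pos.mpr hs)).symm⟩
  set P : ℂ[X] := ∏ j ∈ s, (X - C (z j / q)) with hP
  set Q : ℂ[X] := ∏ j ∈ s, (X - C (z j)) with hQ
  have hmP : P.Monic := monic_prod_of_monic _ _ fun _ _ => monic_X_sub_C _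
  have hmQ : Q.Monic := monic_prod_of_monic _ _ fun _ _ => monic_X_sub_C _
  have hdP : P.natDegree = s.card := by
    rw [hP, natDegree_prod_of_monic _ _ fun _ _ => monic_X_sub_C _]
    simp
  have hdQ : Q.natDegree = s.card := by
    rw [hQ, natDegree_prod_of_monic _ _ fun _ _ => monic_X_sub_C _]
    simp
  have hdeg' : (P - Q).degree < (s.card : ℕ) := by
    rcases eq_or_ne P Q with h | h
    · rw [h, sub_self, degree_zero]
      exact_mod_cast WithBot.bot_lt_coe _
    · have hdd : P.degree = Q.degree := by
        rw [degree_eq_natDegree hmP.ne_zero, degree_eq_natDegree hmQ.ne_zero, hdP, hdQ]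
      have := Polynomial.degree_sub_lt hdd hmP.ne_zero
        (by rw [hmP.leadingCoeff, hmQ.leadingCoeff])
      rw [degree_eq_natDegree hmP.ne_zero, hdP] at this
      exact_mod_cast this
  have key := Lagrange.eq_interpolate (v := z) hz hdeg'
  have E := congrArg (eval 0) key
  rw [Lagrange.interpolate_apply, eval_finset_sum] at E
  set Z := ∏ j ∈ s, z j with hZdef
  have hZ : Z ≠ 0 := prod_ne_zero_iff.mpr h0
  have hL : eval 0 (P - Q) = (-q⁻¹) ^ s.card * Z - (-1) ^ s.card * Z := by
    rw [eval_sub, hP, hQ, eval_prod, eval_prod]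
    simp only [eval_sub, eval_X, eval_C, zero_sub]
    rw [Finset.prod_congr rfl (fun x _ => show -(z x / q) = (-q⁻¹) * z x by ring),
      Finset.prod_congr rfl (fun x _ => show -z x = (-1 : ℂ) * z x by ring),
      Finset.prod_mul_distrib, Finset.prod_mul_distrib, prod_const, prod_const]
  set c : ℂ := ((q - 1) / q) * (-q⁻¹) ^ n * Z with hcdef
  have hterm : ∀ p ∈ s, eval 0 (C (eval (z p) (P - Q)) * Lagrange.basis s z p)
      = c * ∏ j ∈ s.erase p, (z j - q * z p) / (z j - z p) := by
    intro p hp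
    rw [eval_mul, eval_C]
    have hQ0 : eval (z p) Q = 0 := by
      rw [hQ, eval_prod]
      exact Finset.prod_eq_zero hp (by simp)
    have h1 : eval (z p) (P - Q) = (z p - z p / q) * ∏ j ∈ s.erase p, (z p - z j / q) := by
      rw [eval_sub, hQ0, sub_zero, hP, eval_prod]
      simp only [eval_sub, eval_X, eval_C]
      exact (Finset.mul_prod_erase s _ hp).symm
    have h2 : eval 0 (Lagrange.basis s z p)
        = ∏ j ∈ s.erase p, ((z p - z j)⁻¹ * (0 - z j)) := by
      rw [Lagrange.basis, eval_prod]
      exact Finset.prod_congr rfl fun j _ => by simp [Lagrange.basisDivisor]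
    rw [h1, h2, mul_assoc, ← Finset.prod_mul_distrib]
    have h3 : ∏ j ∈ s.erase p, ((z p - z j / q) * ((z p - z j)⁻¹ * (0 - z j)))
        = ∏ j ∈ s.erase p, ((-q⁻¹ * z j) * ((z j - q * z p) / (z j - z p))) := by
      refine Finset.prod_congr rfl fun j hj => ?_
      have hj' := Finset.mem_erase.mp hj
      have hzj : z j ≠ 0 := h0 j hj'.2
      have hne : z p - z j ≠ 0 := sub_ne_zero.mpr fun h => hj'.1 (hz hp hj'.2 h).symm
      have hne' : z j - z p ≠ 0 := sub_ne_zero.mpr fun h => hj'.1 (hz hj'.2 hp h)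
      field_simp
      ring
    rw [h3, Finset.prod_mul_distrib]
    rw [Finset.prod_congr rfl (fun x _ => show -q⁻¹ * z x = (-q⁻¹) * z x from rfl),
      Finset.prod_mul_distrib, prod_const, card_erase_of_mem hp, hn]
    simp only [Nat.add_sub_cancel]
    have h4 : z p * ∏ j ∈ s.erase p, z j = Z := Finset.mul_prod_erase s _ hp
    have h5 : z p - z p / q = ((q - 1) / q) * z p := by field_simp
    rw [h5, hcdef]
    rw [← h4]
    ring
  rw [Finset.sum_congr rfl hterm, ← Finset.mul_sum, hL] at E
  have hc : c ≠ 0 := by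
    refine mul_ne_zero (mul_ne_zero (div_ne_zero ?_ hq0) (pow_ne_zero _ ?_)) hZ
    · exact sub_ne_zero.mpr hq1
    · exact neg_ne_zero.mpr (inv_ne_zero hq0)
  refine mul_left_cancel₀ hc ?_
  rw [← E, hcdef, hn]
  have hq1' : (1 : ℂ) - q ≠ 0 := sub_ne_zero.mpr (Ne.symm hq1)
  rw [neg_pow, neg_pow, inv_pow]
  field_simp
  have hqn : q ^ n * q⁻¹ ^ n = 1 := by rw [← mul_pow, mul_inv_cancel₀ hq0, one_pow]
  linear_combination (q * (-1) ^ n - q ^ 2 * q ^ n * (-1) ^ n - q ^ 2 * (-1) ^ n + q ^ 3 * q ^ n * (-1) ^ n) * hqn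

lemma sumKey (q : ℂ) (hq0 : q ≠ 0) (hq1 : q ≠ 1) {ι : Type*} [DecidableEq ι] (s : Finset ι)
    (z : ι → ℂ) (hz : Set.InjOn z s) :
    ∑ p ∈ s, ∏ j ∈ s.erase p, (z j - q * z p) / (z j - z p)
      = (1 - q ^ s.card) / (1 - q) := by
  by_cases hall : ∀ i ∈ s, z i ≠ 0
  · exact sumA q hq0 hq1 s z hz hall
  push_neg at hall
  obtain ⟨p0, hp0, hz0⟩ := hall
  have hq1' : (1 : ℂ) - q ≠ 0 := sub_ne_zero.mpr (Ne.symm hq1)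
  have hnz : ∀ j ∈ s.erase p0, z j ≠ 0 := by
    intro j hj
    have hj' := Finset.mem_erase.mp hj
    intro h
    exact hj'.1 (hz hj'.2 hp0 (h.trans hz0.symm))
  rw [← Finset.add_sum_erase _ _ hp0]
  have hT0 : ∏ j ∈ s.erase p0, (z j - q * z p0) / (z j - z p0) = 1 := by
    refine Finset.prod_eq_one fun j hj => ?_
    rw [hz0, mul_zero, sub_zero, div_self (hnz j hj)]
  have hrest : ∑ p ∈ s.erase p0, ∏ j ∈ s.erase p, (z j - q * z p) / (z j - z p)
      = q * ((1 - q ^ (s.erase p0).card) / (1 - q)) := by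
    rw [← sumA q hq0 hq1 (s.erase p0) z (hz.mono (by simp [Finset.erase_subset])) hnz,
      Finset.mul_sum]
    refine Finset.sum_congr rfl fun p hp => ?_
    have hp' := Finset.mem_erase.mp hp
    have hp0' : p0 ∈ s.erase p := Finset.mem_erase.mpr ⟨Ne.symm hp'.1, hp0⟩
    rw [← Finset.mul_prod_erase _ _ hp0', Finset.erase_right_comm]
    have hzp : z p ≠ 0 := hnz p hp
    rw [hz0, zero_sub, zero_sub, neg_div_neg_eq, mul_div_assoc, div_self hzp, mul_one]
  rw [hT0, hrest, Finset.card_erase_of_mem hp0]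
  obtain ⟨n, hn⟩ : ∃ n, s.card = n + 1 :=
    ⟨s.card - 1, (Nat.succ_pred_eq_of_pos (card_pos.mpr ⟨p0, hp0⟩)).symm⟩
  rw [hn]
  simp only [Nat.add_sub_cancel]
  field_simp
  ring

lemma pairSplit {n : ℕ} (f : Fin (n+1) → Fin (n+1) → ℂ) :
    ∏ p ∈ univ.filter (fun p : Fin (n+1) × Fin (n+1) => p.1 < p.2), f p.1 p.2
      = (∏ j : Fin n, f 0 j.succ) *
        ∏ p ∈ univ.filter (fun p : Fin n × Fin n => p.1 < p.2), f p.1.succ p.2.succ := by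
  rw [← Finset.prod_filter_mul_prod_filter_not
    (univ.filter fun p : Fin (n+1) × Fin (n+1) => p.1 < p.2) (fun p => p.1 = 0),
    Finset.filter_filter, Finset.filter_filter]
  congr 1
  · have himg : univ.filter (fun p : Fin (n+1) × Fin (n+1) => p.1 < p.2 ∧ p.1 = 0)
        = Finset.image (fun j : Fin n => ((0 : Fin (n+1)), j.succ)) univ := by
      ext p
      simp only [mem_filter, mem_univ, true_and, Finset.mem_image]
      constructor
      · rintro ⟨hlt, h0⟩
        have h2 : p.2 ≠ 0 := by
          intro h
          rw [h0, h] at hlt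
          exact lt_irrefl _ hlt
        obtain ⟨j, hj⟩ := Fin.exists_succ_eq.mpr h2
        exact ⟨j, by rw [hj, ← h0]⟩
      · rintro ⟨j, rfl⟩
        exact ⟨Fin.succ_pos j, rfl⟩
    rw [himg, Finset.prod_image (by intro a _ b _ h; simpa [Fin.succ_inj] using h)]
  · have himg : univ.filter (fun p : Fin (n+1) × Fin (n+1) => p.1 < p.2 ∧ ¬p.1 = 0)
        = Finset.image (fun p : Fin n × Fin n => (p.1.succ, p.2.succ))
            (univ.filter fun p : Fin n × Fin n => p.1 < p.2) := by
      ext p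
      simp only [mem_filter, mem_univ, true_and, Finset.mem_image]
      constructor
      · rintro ⟨hlt, h0⟩
        obtain ⟨i, hi⟩ := Fin.exists_succ_eq.mpr h0
        have h2 : p.2 ≠ 0 := by
          intro h
          rw [h] at hlt
          exact absurd hlt (Fin.not_lt_zero _)
        obtain ⟨j, hj⟩ := Fin.exists_succ_eq.mpr h2
        refine ⟨(i, j), ?_, by rw [hi, hj]⟩
        rw [← Fin.succ_lt_succ_iff, hi, hj]
        exact hlt
      · rintro ⟨⟨i, j⟩, hij, rfl⟩
        exact ⟨Fin.succ_lt_succ_iff.mpr hij, Fin.succ_ne_zero i⟩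
    rw [himg, Finset.prod_image (by
      rintro ⟨a1, a2⟩ _ ⟨b1, b2⟩ _ h
      simpa [Prod.ext_iff, Fin.succ_inj] using h)]

lemma mainAux (q : ℂ) (hq0 : q ≠ 0) (hq1 : q ≠ 1) :
    ∀ (k : ℕ) (z : Fin k → ℂ), Function.Injective z →
    ∑ σ : Equiv.Perm (Fin k), ∏ p ∈ univ.filter (fun p : Fin k × Fin k => p.1 < p.2),
      (z (σ p.2) - q * z (σ p.1)) / (z (σ p.2) - z (σ p.1))
    = (∏ i ∈ range k, (1 - q ^ (i+1))) / (1 - q) ^ k := by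
  intro k
  induction k with
  | zero =>
    intro z hz
    simp
  | succ k ih =>
    intro z hz
    rw [← Equiv.sum_comp (Equiv.Perm.decomposeFin (n := k)).symm, Fintype.sum_prod_type]
    have hswap : ∀ p : Fin (k+1), Function.Injective
        (fun i : Fin k => z (Equiv.swap 0 p i.succ)) :=
      fun p => hz.comp ((Equiv.swap 0 p).injective.comp (Fin.succ_injective k))
    have hstep : ∀ p : Fin (k+1), ∀ e : Equiv.Perm (Fin k),
        ∏ pr ∈ univ.filter (fun pr : Fin (k+1) × Fin (k+1) => pr.1 < pr.2),
          (z ((Equiv.Perm.decomposeFin.symm (p, e)) pr.2)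
              - q * z ((Equiv.Perm.decomposeFin.symm (p, e)) pr.1)) /
            (z ((Equiv.Perm.decomposeFin.symm (p, e)) pr.2)
              - z ((Equiv.Perm.decomposeFin.symm (p, e)) pr.1))
        = (∏ j : Fin k, (z (Equiv.swap 0 p j.succ) - q * z p)
              / (z (Equiv.swap 0 p j.succ) - z p)) *
          ∏ pr ∈ univ.filter (fun pr : Fin k × Fin k => pr.1 < pr.2),
            (z (Equiv.swap 0 p (e pr.2).succ) - q * z (Equiv.swap 0 p (e pr.1).succ))
              / (z (Equiv.swap 0 p (e pr.2).succ) - z (Equiv.swap 0 p (e pr.1).succ)) := by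
      intro p e
      rw [pairSplit (fun a b => (z ((Equiv.Perm.decomposeFin.symm (p, e)) b)
          - q * z ((Equiv.Perm.decomposeFin.symm (p, e)) a)) /
          (z ((Equiv.Perm.decomposeFin.symm (p, e)) b)
          - z ((Equiv.Perm.decomposeFin.symm (p, e)) a)))]
      congr 1
      · simp only [Equiv.Perm.decomposeFin_symm_apply_zero,
          Equiv.Perm.decomposeFin_symm_apply_succ]
        exact Equiv.prod_comp e (fun j => (z (Equiv.swap 0 p j.succ) - q * z p)
          / (z (Equiv.swap 0 p j.succ) - z p))
      · simp only [Equiv.Perm.decomposeFin_symm_apply_succ]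
    simp only [hstep]
    have hinner : ∀ p : Fin (k+1),
        ∑ e : Equiv.Perm (Fin k),
          (∏ j : Fin k, (z (Equiv.swap 0 p j.succ) - q * z p)
              / (z (Equiv.swap 0 p j.succ) - z p)) *
          ∏ pr ∈ univ.filter (fun pr : Fin k × Fin k => pr.1 < pr.2),
            (z (Equiv.swap 0 p (e pr.2).succ) - q * z (Equiv.swap 0 p (e pr.1).succ))
              / (z (Equiv.swap 0 p (e pr.2).succ) - z (Equiv.swap 0 p (e pr.1).succ))
        = (∏ j : Fin k, (z (Equiv.swap 0 p j.succ) - q * z p)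
              / (z (Equiv.swap 0 p j.succ) - z p)) *
          ((∏ i ∈ range k, (1 - q ^ (i+1))) / (1 - q) ^ k) := by
      intro p
      rw [← Finset.mul_sum]
      congr 1
      exact ih (fun i => z (Equiv.swap 0 p i.succ)) (hswap p)
    simp only [hinner]
    rw [← Finset.sum_mul]
    have hC : ∑ p : Fin (k+1), ∏ j : Fin k,
        (z (Equiv.swap 0 p j.succ) - q * z p) / (z (Equiv.swap 0 p j.succ) - z p)
        = (1 - q ^ (k+1)) / (1 - q) := by
      have hre : ∀ p : Fin (k+1), (∏ j : Fin k,
          (z (Equiv.swap 0 p j.succ) - q * z p) / (z (Equiv.swap 0 p j.succ) - z p))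
          = ∏ t ∈ univ.erase p, (z t - q * z p) / (z t - z p) := by
        intro p
        have himg : (univ : Finset (Fin (k+1))).erase p
            = Finset.image (fun j : Fin k => Equiv.swap 0 p j.succ) univ := by
          ext t
          simp only [Finset.mem_erase, mem_univ, and_true, Finset.mem_image, true_and]
          constructor
          · intro ht
            have h1 : Equiv.swap 0 p t ≠ 0 := by
              intro h
              apply ht
              have := congrArg (Equiv.swap 0 p) h
              rwa [Equiv.swap_apply_self, Equiv.swap_apply_left] at this
            obtain ⟨j, hj⟩ := Fin.exists_succ_eq.mpr h1
            exact ⟨j, by rw [hj, Equiv.swap_apply_self]⟩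
          · rintro ⟨j, rfl⟩
            intro h
            have := congrArg (Equiv.swap 0 p) h
            rw [Equiv.swap_apply_self, Equiv.swap_apply_right] at this
            exact Fin.succ_ne_zero j this
        rw [himg, Finset.prod_image (by
          intro a _ b _ h
          exact Fin.succ_injective k ((Equiv.swap 0 p).injective h))]
      simp only [hre]
      have := sumKey q hq0 hq1 (univ : Finset (Fin (k+1))) z hz.injOn
      rwa [Finset.card_univ, Fintype.card_fin] at this
    rw [hC, Finset.prod_range_succ, pow_succ]
    have h1q : (1 : ℂ) - q ≠ 0 := sub_ne_zero.mpr (Ne.symm hq1)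
    field_simp
    ring

theorem stmt7 (q : ℝ) (hq : q ∈ Set.Ioo (0:ℝ) 1) (k : ℕ) (hk : 1 ≤ k)
    (z : Fin k → ℂ) (hz : Function.Injective z) :
    ∑ σ : Equiv.Perm (Fin k),
      ∏ p ∈ Finset.univ.filter (fun p : Fin k × Fin k => p.1 < p.2),
        (z (σ p.2) - (q : ℂ) * z (σ p.1)) / (z (σ p.2) - z (σ p.1))
    = (∏ i ∈ Finset.range k, (1 - (q : ℂ) ^ (i + 1))) / (1 - (q : ℂ)) ^ k := by
  have hq0 : (q : ℂ) ≠ 0 := Complex.ofReal_ne_zero.mpr (ne_of_gt hq.1)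
  have hq1 : (q : ℂ) ≠ 1 := by
    intro h
    have : q = 1 := by exact_mod_cast h
    exact absurd (this ▸ hq.2) (lt_irrefl 1)
  exact mainAux (q : ℂ) hq0 hq1 k z hz
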